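/- Consider h : ℝ³ → ℝ³ defined by h(x) = (sgn(x₂+x₃−2x₁), sgn(x₁+x₃−2x₂), sgn(x₁+x₂−2x₃)), where sgn is the scalar signum. For every point x₀ = η·(1,1,1) with η ∈ ℝ, the Filippov set-valued map satisfies F[h](x₀) = co{ν₁, ν₂, ν₃, −ν₁, −ν₂, −ν₃}, where ν₁ = (1,1,−1), ν₂ = (1,−1,1), ν₃ = (−1,1,1). In particular, {η·(1,1,1) : η ∈ [−1/3, 1/3]} ⊆ F[h](x₀). -/

import Mathlib

open MeasureTheory Set
open scoped ENNReal

noncomputable def eBall {ι : Type*} [Fintype ι] (x : ι → ℝ) (δ : ℝ) : Set (ι → ℝ) :=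
  {y | Real.sqrt (∑ i, (y i - x i) ^ 2) < δ}

noncomputable def filippov {ι κ : Type*} [Fintype ι] [Fintype κ]
    (h : (ι → ℝ) → (κ → ℝ)) (x : ι → ℝ) : Set (κ → ℝ) :=
  ⋂ (δ : ℝ) (_ : 0 < δ) (S : Set (ι → ℝ)) (_ : volume S = 0),
    closure (convexHull ℝ (h '' (eBall x δ \ S)))

noncomputable def ssign (s : ℝ) : ℝ := if 0 < s then 1 else if s < 0 then -1 else 0

/-- The three-node example system
`h(x) = (sgn(x₂+x₃−2x₁), sgn(x₁+x₃−2x₂), sgn(x₁+x₂−2x₃))`. -/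
noncomputable def hex (x : Fin 3 → ℝ) : Fin 3 → ℝ :=
  ![ssign (x 1 + x 2 - 2 * x 0), ssign (x 0 + x 2 - 2 * x 1), ssign (x 0 + x 1 - 2 * x 2)]

def S6 : Set (Fin 3 → ℝ) :=
  {![1, 1, -1], ![1, -1, 1], ![-1, 1, 1], -![1, 1, -1], -![1, -1, 1], -![-1, 1, 1]}

lemma S6_finite : S6.Finite := by
  unfold S6
  exact (((((Set.finite_singleton _).insert _).insert _).insert _).insert _).insert _

lemma ssign_pos {s : ℝ} (h : 0 < s) : ssign s = 1 := by simp [ssign, h]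
lemma ssign_neg {s : ℝ} (h : s < 0) : ssign s = -1 := by
  simp [ssign, h, not_lt.mpr h.le]
lemma ssign_zero {s : ℝ} (h : s = 0) : ssign s = 0 := by simp [ssign, h]

lemma mid_mem {u w : Fin 3 → ℝ} (hu : u ∈ S6) (hw : w ∈ S6) :
    (1/2 : ℝ) • u + (1/2 : ℝ) • w ∈ convexHull ℝ S6 :=
  (convex_convexHull ℝ S6) (subset_convexHull ℝ S6 hu) (subset_convexHull ℝ S6 hw)
    (by norm_num) (by norm_num) (by norm_num)

lemma memA : (![(-1:ℝ), 0, 1] : Fin 3 → ℝ) ∈ convexHull ℝ S6 := by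
  have h := mid_mem (u := ![-1,1,1]) (w := -![1,1,-1]) (by simp [S6]) (by simp [S6])
  convert h using 2
  funext i; fin_cases i <;> norm_num

lemma memB : (![(-1:ℝ), 1, 0] : Fin 3 → ℝ) ∈ convexHull ℝ S6 := by
  have h := mid_mem (u := ![-1,1,1]) (w := -![1,-1,1]) (by simp [S6]) (by simp [S6])
  convert h using 2
  funext i; fin_cases i <;> norm_num

lemma memC : (![(0:ℝ), -1, 1] : Fin 3 → ℝ) ∈ convexHull ℝ S6 := by
  have h := mid_mem (u := ![1,-1,1]) (w := -![1,1,-1]) (by simp [S6]) (by simp [S6])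
  convert h using 2
  funext i; fin_cases i <;> norm_num

lemma memD : (![(0:ℝ), 0, 0] : Fin 3 → ℝ) ∈ convexHull ℝ S6 := by
  have h := mid_mem (u := ![1,1,-1]) (w := -![1,1,-1]) (by simp [S6]) (by simp [S6])
  convert h using 2
  funext i; fin_cases i <;> norm_num

lemma memE : (![(0:ℝ), 1, -1] : Fin 3 → ℝ) ∈ convexHull ℝ S6 := by
  have h := mid_mem (u := ![1,1,-1]) (w := -![1,-1,1]) (by simp [S6]) (by simp [S6])
  convert h using 2
  funext i; fin_cases i <;> norm_num

lemma memF : (![(1:ℝ), -1, 0] : Fin 3 → ℝ) ∈ convexHull ℝ S6 := by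
  have h := mid_mem (u := ![1,-1,1]) (w := -![-1,1,1]) (by simp [S6]) (by simp [S6])
  convert h using 2
  funext i; fin_cases i <;> norm_num

lemma memG : (![(1:ℝ), 0, -1] : Fin 3 → ℝ) ∈ convexHull ℝ S6 := by
  have h := mid_mem (u := ![1,1,-1]) (w := -![-1,1,1]) (by simp [S6]) (by simp [S6])
  convert h using 2
  funext i; fin_cases i <;> norm_num

lemma hex_mem (x : Fin 3 → ℝ) : hex x ∈ convexHull ℝ S6 := by
  set a := x 1 + x 2 - 2 * x 0 with ha'
  set b := x 0 + x 2 - 2 * x 1 with hb'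
  set c := x 0 + x 1 - 2 * x 2 with hc'
  have hsum : a + b + c = 0 := by rw [ha', hb', hc']; ring
  have hx : hex x = ![ssign a, ssign b, ssign c] := rfl
  rw [hx]
  rcases lt_trichotomy a 0 with ha | ha | ha <;>
    rcases lt_trichotomy b 0 with hb | hb | hb <;>
      rcases lt_trichotomy c 0 with hc | hc | hc <;>
        first
        | linarith
        | (simp only [ssign_pos, ssign_neg, ssign_zero, ha, hb, hc]
           first
           | (apply subset_convexHull ℝ S6; simp [S6]; done)
           | exact memA | exact memB | exact memC | exact memD
           | exact memE | exact memF | exact memG)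

lemma eBall_open (x : Fin 3 → ℝ) (δ : ℝ) : IsOpen (eBall x δ) :=
  isOpen_lt (by fun_prop) continuous_const

lemma open_diff_nonempty {U S : Set (Fin 3 → ℝ)} (hU : IsOpen U) (hne : U.Nonempty)
    (hS : volume S = 0) : (U \ S).Nonempty := by
  rw [Set.nonempty_iff_ne_empty]
  intro h
  have hsub : U ⊆ S := Set.diff_eq_empty.mp h
  exact (hU.measure_pos volume hne).not_ge ((measure_mono hsub).trans_eq hS)

lemma upper (η : ℝ) : filippov hex (fun _ => η) ⊆ convexHull ℝ S6 := by
  intro v hv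
  simp only [filippov, Set.mem_iInter] at hv
  have h1 := hv 1 one_pos ∅ (by simp)
  have himg : hex '' (eBall (fun _ => η) 1 \ ∅) ⊆ convexHull ℝ S6 := by
    rintro _ ⟨y, -, rfl⟩; exact hex_mem y
  have hco := convexHull_min himg (convex_convexHull ℝ S6)
  exact closure_minimal hco (S6_finite.isClosed_convexHull (𝕜 := ℝ)) h1

lemma closure_helper {η δ : ℝ} {S : Set (Fin 3 → ℝ)} (hS : volume S = 0)
    {ν : Fin 3 → ℝ} {U : Set (Fin 3 → ℝ)} (hU : IsOpen U)
    (hUc : ∀ y ∈ U, hex y = ν) {y₀ : Fin 3 → ℝ} (hy₀ : y₀ ∈ U)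
    (hball : y₀ ∈ eBall (fun _ => η) δ) :
    ν ∈ closure (convexHull ℝ (hex '' (eBall (fun _ => η) δ \ S))) := by
  obtain ⟨y, ⟨hyU, hyB⟩, hyS⟩ :=
    open_diff_nonempty (hU.inter (eBall_open _ δ)) ⟨y₀, hy₀, hball⟩ hS
  exact subset_closure (subset_convexHull ℝ _ ⟨y, ⟨hyB, hyS⟩, hUc y hyU⟩)

lemma ball_aux {η δ : ℝ} (hδ : 0 < δ) (y : Fin 3 → ℝ)
    (h : (y 0 - η)^2 + (y 1 - η)^2 + (y 2 - η)^2 = (δ/2)^2) :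
    y ∈ eBall (fun _ => η) δ := by
  simp only [eBall, Set.mem_setOf_eq, Fin.sum_univ_three, h]
  rw [Real.sqrt_sq (by positivity)]; linarith

lemma vert_closure (η : ℝ) {δ : ℝ} (hδ : 0 < δ) {S : Set (Fin 3 → ℝ)}
    (hS : volume S = 0) {ν : Fin 3 → ℝ} (hν : ν ∈ S6) :
    ν ∈ closure (convexHull ℝ (hex '' (eBall (fun _ => η) δ \ S))) := by
  simp only [S6, Set.mem_insert_iff, Set.mem_singleton_iff] at hν
  rcases hν with rfl | rfl | rfl | rfl | rfl | rfl
  · refine closure_helper hS (U := {y | 0 < y 1 + y 2 - 2*y 0} ∩ {y | 0 < y 0 + y 2 - 2*y 1}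
      ∩ {y | y 0 + y 1 - 2*y 2 < 0})
      (((isOpen_lt (by fun_prop) (by fun_prop)).inter
        (isOpen_lt (by fun_prop) (by fun_prop))).inter (isOpen_lt (by fun_prop) (by fun_prop)))
      ?_ (y₀ := ![η, η, η + δ/2]) ?_ (ball_aux hδ _ (by simp; try ring))
    · rintro y ⟨⟨h1, h2⟩, h3⟩
      funext i; fin_cases i <;>
        simp [hex, ssign_pos h1, ssign_pos h2, ssign_neg h3]
    · refine ⟨⟨?_, ?_⟩, ?_⟩ <;> (simp [Set.mem_setOf_eq]; linarith)
  · refine closure_helper hS (U := {y | 0 < y 1 + y 2 - 2*y 0} ∩ {y | y 0 + y 2 - 2*y 1 < 0}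
      ∩ {y | 0 < y 0 + y 1 - 2*y 2})
      (((isOpen_lt (by fun_prop) (by fun_prop)).inter
        (isOpen_lt (by fun_prop) (by fun_prop))).inter (isOpen_lt (by fun_prop) (by fun_prop)))
      ?_ (y₀ := ![η, η + δ/2, η]) ?_ (ball_aux hδ _ (by simp; try ring))
    · rintro y ⟨⟨h1, h2⟩, h3⟩
      funext i; fin_cases i <;>
        simp [hex, ssign_pos h1, ssign_neg h2, ssign_pos h3]
    · refine ⟨⟨?_, ?_⟩, ?_⟩ <;> (simp [Set.mem_setOf_eq]; linarith)
  · refine closure_helper hS (U := {y | y 1 + y 2 - 2*y 0 < 0} ∩ {y | 0 < y 0 + y 2 - 2*y 1}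
      ∩ {y | 0 < y 0 + y 1 - 2*y 2})
      (((isOpen_lt (by fun_prop) (by fun_prop)).inter
        (isOpen_lt (by fun_prop) (by fun_prop))).inter (isOpen_lt (by fun_prop) (by fun_prop)))
      ?_ (y₀ := ![η + δ/2, η, η]) ?_ (ball_aux hδ _ (by simp; try ring))
    · rintro y ⟨⟨h1, h2⟩, h3⟩
      funext i; fin_cases i <;>
        simp [hex, ssign_neg h1, ssign_pos h2, ssign_pos h3]
    · refine ⟨⟨?_, ?_⟩, ?_⟩ <;> (simp [Set.mem_setOf_eq]; linarith)
  · refine closure_helper hS (U := {y | y 1 + y 2 - 2*y 0 < 0} ∩ {y | y 0 + y 2 - 2*y 1 < 0}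
      ∩ {y | 0 < y 0 + y 1 - 2*y 2})
      (((isOpen_lt (by fun_prop) (by fun_prop)).inter
        (isOpen_lt (by fun_prop) (by fun_prop))).inter (isOpen_lt (by fun_prop) (by fun_prop)))
      ?_ (y₀ := ![η, η, η - δ/2]) ?_ (ball_aux hδ _ (by simp; try ring))
    · rintro y ⟨⟨h1, h2⟩, h3⟩
      funext i; fin_cases i <;>
        simp [hex, ssign_neg h1, ssign_neg h2, ssign_pos h3]
    · refine ⟨⟨?_, ?_⟩, ?_⟩ <;> (simp [Set.mem_setOf_eq]; linarith)
  · refine closure_helper hS (U := {y | y 1 + y 2 - 2*y 0 < 0} ∩ {y | 0 < y 0 + y 2 - 2*y 1}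
      ∩ {y | y 0 + y 1 - 2*y 2 < 0})
      (((isOpen_lt (by fun_prop) (by fun_prop)).inter
        (isOpen_lt (by fun_prop) (by fun_prop))).inter (isOpen_lt (by fun_prop) (by fun_prop)))
      ?_ (y₀ := ![η, η - δ/2, η]) ?_ (ball_aux hδ _ (by simp; try ring))
    · rintro y ⟨⟨h1, h2⟩, h3⟩
      funext i; fin_cases i <;>
        simp [hex, ssign_neg h1, ssign_pos h2, ssign_neg h3]
    · refine ⟨⟨?_, ?_⟩, ?_⟩ <;> (simp [Set.mem_setOf_eq]; linarith)
  · refine closure_helper hS (U := {y | 0 < y 1 + y 2 - 2*y 0} ∩ {y | y 0 + y 2 - 2*y 1 < 0}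
      ∩ {y | y 0 + y 1 - 2*y 2 < 0})
      (((isOpen_lt (by fun_prop) (by fun_prop)).inter
        (isOpen_lt (by fun_prop) (by fun_prop))).inter (isOpen_lt (by fun_prop) (by fun_prop)))
      ?_ (y₀ := ![η - δ/2, η, η]) ?_ (ball_aux hδ _ (by simp; try ring))
    · rintro y ⟨⟨h1, h2⟩, h3⟩
      funext i; fin_cases i <;>
        simp [hex, ssign_pos h1, ssign_neg h2, ssign_neg h3]
    · refine ⟨⟨?_, ?_⟩, ?_⟩ <;> (simp [Set.mem_setOf_eq]; linarith)

lemma lower (η : ℝ) : convexHull ℝ S6 ⊆ filippov hex (fun _ => η) := by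
  intro v hv
  simp only [filippov, Set.mem_iInter]
  intro δ hδ S hS
  refine convexHull_min ?_ ((convex_convexHull ℝ _).closure) hv
  intro w hw
  exact vert_closure η hδ hS hw

lemma onethird_mem : (fun _ => (1/3 : ℝ) : Fin 3 → ℝ) ∈ convexHull ℝ S6 := by
  have hq := mid_mem (u := ![1,-1,1]) (w := ![-1,1,1]) (by simp [S6]) (by simp [S6])
  have hp := (convex_convexHull ℝ S6) (subset_convexHull ℝ S6 (show ![(1:ℝ),1,-1] ∈ S6 by simp [S6]))
    hq (by norm_num : (0:ℝ) ≤ 1/3) (by norm_num : (0:ℝ) ≤ 2/3) (by norm_num)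
  convert hp using 1
  funext i; fin_cases i <;> norm_num

lemma neg_onethird_mem : (fun _ => -(1/3 : ℝ) : Fin 3 → ℝ) ∈ convexHull ℝ S6 := by
  have hq := mid_mem (u := -![1,-1,1]) (w := -![-1,1,1]) (by simp [S6]) (by simp [S6])
  have hp := (convex_convexHull ℝ S6) (subset_convexHull ℝ S6 (show -![(1:ℝ),1,-1] ∈ S6 by simp [S6]))
    hq (by norm_num : (0:ℝ) ≤ 1/3) (by norm_num : (0:ℝ) ≤ 2/3) (by norm_num)
  convert hp using 1
  funext i; fin_cases i <;> norm_num

lemma const_mem {c : ℝ} (hc : c ∈ Set.Icc (-(1/3) : ℝ) (1/3)) :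
    (fun _ => c : Fin 3 → ℝ) ∈ convexHull ℝ S6 := by
  obtain ⟨h1, h2⟩ := hc
  have hθ0 : 0 ≤ (3*c+1)/2 := by linarith
  have hθ1 : 0 ≤ 1 - (3*c+1)/2 := by linarith
  have h := (convex_convexHull ℝ S6) onethird_mem neg_onethird_mem hθ0 hθ1 (by ring)
  convert h using 1
  funext i
  simp only [Pi.add_apply, Pi.smul_apply, smul_eq_mul]
  ring

/-- **Filippov set-valued map on the consensus line for the 3-node example.**
At every consensus point `x₀ = η (1,1,1)`,
`F[h](x₀) = co{ν₁, ν₂, ν₃, -ν₁, -ν₂, -ν₃}` with `ν₁ = (1,1,-1)`, `ν₂ = (1,-1,1)`,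
`ν₃ = (-1,1,1)`; in particular `{η (1,1,1) : η ∈ [-1/3, 1/3]} ⊆ F[h](x₀)`. -/
theorem filippov_three_node_consensus (η : ℝ) :
    filippov hex (fun _ => η) =
      convexHull ℝ ({![1, 1, -1], ![1, -1, 1], ![-1, 1, 1],
        -![1, 1, -1], -![1, -1, 1], -![-1, 1, 1]} : Set (Fin 3 → ℝ)) ∧
    (fun c : ℝ => (fun _ => c : Fin 3 → ℝ)) '' Set.Icc (-(1/3) : ℝ) (1/3) ⊆
      filippov hex (fun _ => η) := by
  have heq : filippov hex (fun _ => η) = convexHull ℝ S6 :=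
    Set.Subset.antisymm (upper η) (lower η)
  refine ⟨heq, ?_⟩
  rintro _ ⟨c, hc, rfl⟩
  rw [heq]
  exact const_mem hc
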